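/- Let S = (s_1, …, s_n) be any finite list over a type with decidable equality, and for 1 ≤ i ≤ n let c_i be the number of occurrences of s_i among s_1, …, s_{i−1}. Then ∏_{i=1}^n max(c_i, 1) = ∏_a (occ(a, S) − 1)!, where the right-hand product ranges over the distinct elements a occurring in S and occ(a, S) is the number of occurrences of a in S. -/

import Mathlib

/-- `∏_{i=1}^n max(c_i, 1) = ∏_a (occ(a,S) − 1)!`, where `c_i` is the number of
occurrences of `s_i` among `s₁, …, s_{i−1}` and the right-hand product ranges over
the distinct elements of `S`. -/
theorem prod_prev_occurrence_counts {α : Type*} [DecidableEq α] (S : List α) :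
    ∏ i : Fin S.length, max ((S.take i.val).count (S.get i)) 1 =
      ∏ a ∈ S.toFinset, Nat.factorial (S.count a - 1) := by
  induction S using List.reverseRecOn with
  | nil => simp
  | append_singleton T x ih =>
    have hlen : (T ++ [x]).length = T.length + 1 := by simp
    have hL : ∏ i : Fin (T ++ [x]).length,
        max (((T ++ [x]).take i.val).count ((T ++ [x]).get i)) 1
        = (∏ i : Fin T.length, max ((T.take i.val).count (T.get i)) 1) *
          max (T.count x) 1 := by
      rw [Fintype.prod_equiv (finCongr hlen)
        (fun i => max (((T ++ [x]).take i.val).count ((T ++ [x]).get i)) 1)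
        (fun i => max (((T ++ [x]).take i.val).count
          ((T ++ [x]).get (Fin.cast hlen.symm i))) 1) (fun i => rfl)]
      rw [Fin.prod_univ_castSucc]
      congr 1
      · apply Finset.prod_congr rfl
        intro i _
        have hi : (i : ℕ) < T.length := i.isLt
        have h1 : (T ++ [x]).take i.val = T.take i.val :=
          List.take_append_of_le_length (le_of_lt hi)
        have h2 : (T ++ [x]).get (Fin.cast hlen.symm i.castSucc) = T.get i := by
          simp [List.get_eq_getElem, List.getElem_append_left hi]
        rw [h2]
        simp only [Fin.coe_castSucc]
        rw [h1]
      · have h1 : (T ++ [x]).take (Fin.last T.length).val = T := by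
          simp [List.take_append_of_le_length]
        have h2 : (T ++ [x]).get (Fin.cast hlen.symm (Fin.last T.length)) = x := by
          simp [List.get_eq_getElem]
        rw [h1, h2]
    rw [hL, ih]
    by_cases hx : x ∈ T
    · have hmem : x ∈ T.toFinset := List.mem_toFinset.mpr hx
      have htf : (T ++ [x]).toFinset = T.toFinset := by
        ext a; simp; rintro rfl; exact hx
      rw [htf]
      rw [← Finset.prod_erase_mul _ _ hmem, ← Finset.prod_erase_mul _ _ hmem]
      have hc : 1 ≤ T.count x := Nat.one_le_iff_ne_zero.mpr
        (by simp [List.count_eq_zero, hx])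
      rw [mul_assoc]
      congr 1
      · apply Finset.prod_congr rfl
        intro a ha
        have : a ≠ x := (Finset.mem_erase.mp ha).1
        simp [List.count_append, this, Ne.symm this, List.count_cons]
      · simp [List.count_append]
        rw [max_eq_left hc]
        conv_rhs => rw [← Nat.succ_pred_eq_of_pos hc]
        rw [Nat.factorial_succ]
        have : (List.count x T).pred + 1 = List.count x T :=
          Nat.succ_pred_eq_of_pos hc
        rw [this, mul_comm]
        rfl
    · have hc : T.count x = 0 := List.count_eq_zero.mpr hx
      have hmem : x ∉ T.toFinset := by simp [hx]
      have htf : (T ++ [x]).toFinset = insert x T.toFinset := by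
        ext a; simp [or_comm]
      rw [htf, Finset.prod_insert hmem]
      simp [hc, List.count_append]
      apply Finset.prod_congr rfl
      intro a ha
      have : a ≠ x := by rintro rfl; exact hmem ha
      simp [List.count_append, this, Ne.symm this, List.count_cons]
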